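/- Let β > 0 and d = 3. Then (Σ_{0≠k∈ℤ³} (1 + β(2π|k|)⁴)^{-2} (2π|k|)^{-2})^{1/2} ≲ β^{-1/8}, and (Σ_{k∈ℤ³} β(2π|k|)⁴ (1 + β(2π|k|)⁴)^{-2})^{1/2} ≲ β^{-3/8}, with implied absolute constants. -/

import Mathlib

open Real
open scoped ENNReal NNReal

/-- Euclidean norm of a lattice frequency `k ∈ ℤ³`. -/
noncomputable def kn3 (k : ℤ × ℤ × ℤ) : ℝ :=
  Real.sqrt ((k.1 : ℝ) ^ 2 + (k.2.1 : ℝ) ^ 2 + (k.2.2 : ℝ) ^ 2)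

namespace Stmt18

/-- sup-norm of a lattice point, as a natural number -/
def nsup (k : ℤ × ℤ × ℤ) : ℕ := max k.1.natAbs (max k.2.1.natAbs k.2.2.natAbs)

noncomputable def box (m : ℕ) : Finset (ℤ × ℤ × ℤ) :=
  Finset.Icc (-(m : ℤ)) m ×ˢ (Finset.Icc (-(m : ℤ)) m ×ˢ Finset.Icc (-(m : ℤ)) m)

lemma mem_box {k : ℤ × ℤ × ℤ} {m : ℕ} : k ∈ box m ↔ nsup k ≤ m := by
  simp only [box, Finset.mem_product, Finset.mem_Icc, nsup]
  omega

lemma card_box (m : ℕ) : (box m).card = (2 * m + 1) ^ 3 := by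
  have h : (Finset.Icc (-(m : ℤ)) (m : ℤ)).card = 2 * m + 1 := by
    rw [Int.card_Icc]; omega
  simp only [box, Finset.card_product, h]; ring

lemma box_mono {m n : ℕ} (h : m ≤ n) : box m ⊆ box n := by
  intro k hk; rw [mem_box] at *; omega

lemma shell_card {m : ℕ} (hm : 1 ≤ m) :
    (Finset.filter (fun k => nsup k = m) (box m)).card ≤ 26 * m ^ 2 := by
  have hsub : Finset.filter (fun k => nsup k = m) (box m) ⊆ box m \ box (m - 1) := by
    intro k hk
    simp only [Finset.mem_filter, mem_box] at hk
    simp only [Finset.mem_sdiff, mem_box]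
    omega
  calc (Finset.filter (fun k => nsup k = m) (box m)).card
      ≤ (box m \ box (m - 1)).card := Finset.card_le_card hsub
    _ = (box m).card - (box (m - 1)).card := Finset.card_sdiff_of_subset (box_mono (by omega))
    _ ≤ 26 * m ^ 2 := by
        rw [card_box, card_box]
        obtain ⟨n, rfl⟩ : ∃ n, m = n + 1 := ⟨m - 1, by omega⟩
        have h1 : (2 * (n + 1) + 1) ^ 3 = (2 * (n + 1 - 1) + 1) ^ 3 + (24 * n ^ 2 + 48 * n + 26) := by
          simp only [Nat.add_sub_cancel]; ring
        rw [h1, Nat.add_sub_cancel_left]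
        nlinarith

lemma shell_sum (g w : ℕ → ℝ) (hg0 : g 0 = 0) (hw0 : ∀ m, 0 ≤ w m)
    (hw : ∀ m : ℕ, 1 ≤ m → 26 * (m : ℝ) ^ 2 * g m ≤ w m) :
    ∑' k : ℤ × ℤ × ℤ, ENNReal.ofReal (g (nsup k)) ≤ ∑' m : ℕ, ENNReal.ofReal (w m) := by
  have key : ∀ m : ℕ, (∑' k : ℤ × ℤ × ℤ, if nsup k = m then ENNReal.ofReal (g m) else 0)
      ≤ ENNReal.ofReal (w m) := by
    intro m
    have hsupp : ∀ k ∉ Finset.filter (fun k => nsup k = m) (box m),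
        (if nsup k = m then ENNReal.ofReal (g m) else 0) = 0 := by
      intro k hk
      rw [if_neg]
      intro h
      exact hk (Finset.mem_filter.2 ⟨mem_box.2 h.le, h⟩)
    rw [tsum_eq_sum hsupp]
    rcases Nat.eq_zero_or_pos m with h0 | h1
    · subst h0
      have : ∀ k ∈ Finset.filter (fun k => nsup k = 0) (box 0),
          (if nsup k = 0 then ENNReal.ofReal (g 0) else 0) = 0 := by
        intro k _; rw [hg0]; simp
      rw [Finset.sum_congr rfl this]
      simp
    · have hcongr : ∀ k ∈ Finset.filter (fun k => nsup k = m) (box m),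
          (if nsup k = m then ENNReal.ofReal (g m) else 0) = ENNReal.ofReal (g m) := by
        intro k hk; rw [if_pos (Finset.mem_filter.1 hk).2]
      rw [Finset.sum_congr rfl hcongr, Finset.sum_const, nsmul_eq_mul]
      rcases le_or_gt (g m) 0 with hg | hg
      · rw [ENNReal.ofReal_of_nonpos hg, mul_zero]
        exact zero_le
      · calc ((Finset.filter (fun k => nsup k = m) (box m)).card : ℝ≥0∞) * ENNReal.ofReal (g m)
            ≤ ((26 * m ^ 2 : ℕ) : ℝ≥0∞) * ENNReal.ofReal (g m) := by
              exact mul_le_mul_left (Nat.cast_le.2 (shell_card h1)) _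
          _ = ENNReal.ofReal ((26 * m ^ 2 : ℕ) : ℝ) * ENNReal.ofReal (g m) := by
              rw [ENNReal.ofReal_natCast]
          _ = ENNReal.ofReal (((26 * m ^ 2 : ℕ) : ℝ) * g m) := by
              rw [ENNReal.ofReal_mul (by positivity)]
          _ ≤ ENNReal.ofReal (w m) := by
              apply ENNReal.ofReal_le_ofReal
              have := hw m h1
              push_cast
              push_cast at this
              linarith
  calc ∑' k : ℤ × ℤ × ℤ, ENNReal.ofReal (g (nsup k))
      = ∑' k : ℤ × ℤ × ℤ, ∑' m : ℕ, (if nsup k = m then ENNReal.ofReal (g m) else 0) := by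
        refine tsum_congr fun k => ?_
        rw [tsum_eq_single (nsup k) (fun m hm => if_neg fun h => hm h.symm)]
        rw [if_pos rfl]
    _ = ∑' m : ℕ, ∑' k : ℤ × ℤ × ℤ, (if nsup k = m then ENNReal.ofReal (g m) else 0) :=
        ENNReal.tsum_comm
    _ ≤ ∑' m : ℕ, ENNReal.ofReal (w m) := ENNReal.tsum_le_tsum key

lemma tsum_real_le {ι : Type*} (f : ι → ℝ) (hf : ∀ i, 0 ≤ f i) {B : ℝ} (hB : 0 ≤ B)
    (h : ∑' i, ENNReal.ofReal (f i) ≤ ENNReal.ofReal B) : ∑' i, f i ≤ B := by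
  have hne : ∑' i, ENNReal.ofReal (f i) ≠ ⊤ := (h.trans_lt ENNReal.ofReal_lt_top).ne
  have hs : Summable f := by
    have h2 := ENNReal.summable_toReal hne
    have : (fun i => (ENNReal.ofReal (f i)).toReal) = f :=
      funext fun i => ENNReal.toReal_ofReal (hf i)
    rwa [this] at h2
  rw [← ENNReal.ofReal_le_ofReal_iff hB, ENNReal.ofReal_tsum_of_nonneg hf hs]
  exact h

lemma sum_inv_sq_le' (N : ℕ) (hN : 1 ≤ N) : ∀ n : ℕ, N ≤ n →
    ∑ m ∈ Finset.Icc (N + 1) n, (((m : ℝ)) ^ 2)⁻¹ ≤ (N : ℝ)⁻¹ - (n : ℝ)⁻¹ := by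
  intro n
  induction n with
  | zero => omega
  | succ n ih =>
    intro hn
    rcases Nat.lt_or_ge n N with h | h
    · have : N = n + 1 := by omega
      subst this
      rw [Finset.Icc_eq_empty (by omega)]
      simp
    · rw [Finset.sum_Icc_succ_top (by omega : N + 1 ≤ n + 1)]
      have ihh := ih h
      have hn0 : (0 : ℝ) < (n : ℝ) := by
        have : 1 ≤ n := hN.trans h
        exact_mod_cast Nat.cast_pos.mpr (by omega)
      have hn1 : (0 : ℝ) < (n : ℝ) + 1 := by linarith
      have key : (((n : ℝ) + 1) ^ 2)⁻¹ ≤ (n : ℝ)⁻¹ - ((n : ℝ) + 1)⁻¹ := by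
        have heq : (n : ℝ)⁻¹ - ((n : ℝ) + 1)⁻¹ = ((n : ℝ) * ((n : ℝ) + 1))⁻¹ := by
          field_simp
          ring
        rw [heq]
        apply inv_anti₀ (by positivity)
        nlinarith
      push_cast
      push_cast at ihh
      linarith

lemma w_tsum (N : ℕ) (hN : 1 ≤ N) (a b : ℝ) (ha : 0 ≤ a) (hb : 0 ≤ b) :
    ∑' m : ℕ, ENNReal.ofReal (if m = 0 then 0 else if m ≤ N then a else b * (((m : ℝ)) ^ 2)⁻¹)
      ≤ ENNReal.ofReal (a * N + b * (N : ℝ)⁻¹) := by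
  set w : ℕ → ℝ := fun m => if m = 0 then 0 else if m ≤ N then a else b * (((m : ℝ)) ^ 2)⁻¹ with hw
  have hw0 : ∀ m, 0 ≤ w m := by
    intro m; simp only [hw]; split_ifs <;> positivity
  rw [ENNReal.tsum_eq_iSup_sum]
  refine iSup_le fun F => ?_
  rw [← ENNReal.ofReal_sum_of_nonneg (fun m _ => hw0 m)]
  refine ENNReal.ofReal_le_ofReal ?_
  obtain ⟨n, hFn⟩ := F.exists_nat_subset_range
  rw [← Finset.sum_filter_add_sum_filter_not F (fun m => m ≤ N) w]
  have hbulk : ∑ m ∈ F.filter (fun m => m ≤ N), w m ≤ a * N := by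
    have hsub : F.filter (fun m => m ≤ N) ⊆ insert 0 (Finset.Icc 1 N) := by
      intro m hm
      simp only [Finset.mem_filter] at hm
      simp only [Finset.mem_insert, Finset.mem_Icc]
      omega
    calc ∑ m ∈ F.filter (fun m => m ≤ N), w m
        ≤ ∑ m ∈ insert 0 (Finset.Icc 1 N), w m :=
          Finset.sum_le_sum_of_subset_of_nonneg hsub (fun m _ _ => hw0 m)
      _ = w 0 + ∑ m ∈ Finset.Icc 1 N, w m := Finset.sum_insert (by simp)
      _ = ∑ m ∈ Finset.Icc 1 N, w m := by simp [hw]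
      _ ≤ ∑ m ∈ Finset.Icc 1 N, a := by
          refine Finset.sum_le_sum fun m hm => ?_
          simp only [Finset.mem_Icc] at hm
          simp only [hw]
          rw [if_neg (by omega), if_pos hm.2]
      _ = a * N := by
          rw [Finset.sum_const, Nat.card_Icc, nsmul_eq_mul]
          push_cast
          ring_nf
  have htail : ∑ m ∈ F.filter (fun m => ¬ m ≤ N), w m ≤ b * (N : ℝ)⁻¹ := by
    have hsub : F.filter (fun m => ¬ m ≤ N) ⊆ Finset.Icc (N + 1) (n + N) := by
      intro m hm
      simp only [Finset.mem_filter] at hm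
      have := hFn hm.1
      simp only [Finset.mem_range] at this
      simp only [Finset.mem_Icc]
      omega
    have heq : ∀ m ∈ F.filter (fun m => ¬ m ≤ N), w m = b * (((m : ℝ)) ^ 2)⁻¹ := by
      intro m hm
      simp only [Finset.mem_filter] at hm
      simp only [hw]
      rw [if_neg (by omega), if_neg hm.2]
    calc ∑ m ∈ F.filter (fun m => ¬ m ≤ N), w m
        = ∑ m ∈ F.filter (fun m => ¬ m ≤ N), b * (((m : ℝ)) ^ 2)⁻¹ :=
          Finset.sum_congr rfl heq
      _ ≤ ∑ m ∈ Finset.Icc (N + 1) (n + N), b * (((m : ℝ)) ^ 2)⁻¹ :=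
          Finset.sum_le_sum_of_subset_of_nonneg hsub (fun m _ _ => by positivity)
      _ = b * ∑ m ∈ Finset.Icc (N + 1) (n + N), (((m : ℝ)) ^ 2)⁻¹ := by
          rw [Finset.mul_sum]
      _ ≤ b * ((N : ℝ)⁻¹ - ((n + N : ℕ) : ℝ)⁻¹) := by
          apply mul_le_mul_of_nonneg_left (sum_inv_sq_le' N hN (n + N) (by omega)) hb
      _ ≤ b * (N : ℝ)⁻¹ := by
          apply mul_le_mul_of_nonneg_left _ hb
          have : (0 : ℝ) ≤ ((n + N : ℕ) : ℝ)⁻¹ := by positivity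
          linarith
  linarith

lemma engine (F : ℤ × ℤ × ℤ → ℝ) (g : ℕ → ℝ) (N : ℕ) (a b : ℝ)
    (hF0 : ∀ k, 0 ≤ F k) (hFg : ∀ k, F k ≤ g (nsup k)) (hg0 : g 0 = 0)
    (hN : 1 ≤ N) (ha : 0 ≤ a) (hb : 0 ≤ b)
    (hbulk : ∀ m : ℕ, 1 ≤ m → m ≤ N → 26 * (m : ℝ) ^ 2 * g m ≤ a)
    (htail : ∀ m : ℕ, N < m → 26 * (m : ℝ) ^ 2 * g m ≤ b * (((m : ℝ)) ^ 2)⁻¹) :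
    ∑' k : ℤ × ℤ × ℤ, F k ≤ a * N + b * (N : ℝ)⁻¹ := by
  set w : ℕ → ℝ := fun m => if m = 0 then 0 else if m ≤ N then a else b * (((m : ℝ)) ^ 2)⁻¹ with hwdef
  have hw0 : ∀ m, 0 ≤ w m := by
    intro m; simp only [hwdef]; split_ifs <;> positivity
  apply tsum_real_le F hF0 (by positivity)
  calc ∑' k : ℤ × ℤ × ℤ, ENNReal.ofReal (F k)
      ≤ ∑' k : ℤ × ℤ × ℤ, ENNReal.ofReal (g (nsup k)) :=
        ENNReal.tsum_le_tsum fun k => ENNReal.ofReal_le_ofReal (hFg k)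
    _ ≤ ∑' m : ℕ, ENNReal.ofReal (w m) := by
        apply shell_sum g w hg0 hw0
        intro m hm
        simp only [hwdef]
        rw [if_neg (by omega)]
        rcases le_or_gt m N with h | h
        · rw [if_pos h]; exact hbulk m hm h
        · rw [if_neg (by omega)]; exact htail m h
    _ ≤ ENNReal.ofReal (a * N + b * (N : ℝ)⁻¹) := w_tsum N hN a b ha hb

lemma nsup_zero : nsup 0 = 0 := by simp [nsup]

lemma nsup_pos {k : ℤ × ℤ × ℤ} (hk : k ≠ 0) : 1 ≤ nsup k := by
  obtain ⟨a, b, c⟩ := k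
  by_contra h
  apply hk
  simp only [nsup] at h
  have ha : a = 0 := by omega
  have hb : b = 0 := by omega
  have hc : c = 0 := by omega
  simp [ha, hb, hc, Prod.ext_iff]

lemma nsup_le_kn3 (k : ℤ × ℤ × ℤ) : (nsup k : ℝ) ≤ kn3 k := by
  have h1 : ((k.1.natAbs : ℝ)) ^ 2 = (k.1 : ℝ) ^ 2 := by
    rw [Nat.cast_natAbs, Int.cast_abs, sq_abs]
  have h2 : ((k.2.1.natAbs : ℝ)) ^ 2 = (k.2.1 : ℝ) ^ 2 := by
    rw [Nat.cast_natAbs, Int.cast_abs, sq_abs]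
  have h3 : ((k.2.2.natAbs : ℝ)) ^ 2 = (k.2.2 : ℝ) ^ 2 := by
    rw [Nat.cast_natAbs, Int.cast_abs, sq_abs]
  rw [kn3, Real.le_sqrt (by positivity) (by positivity)]
  have hcases : nsup k = k.1.natAbs ∨ nsup k = k.2.1.natAbs ∨ nsup k = k.2.2.natAbs := by
    simp only [nsup]; omega
  rcases hcases with h | h | h <;> rw [h] <;>
    nlinarith [sq_nonneg (k.1 : ℝ), sq_nonneg (k.2.1 : ℝ), sq_nonneg (k.2.2 : ℝ), h1, h2, h3]

lemma kn3_le_two_nsup (k : ℤ × ℤ × ℤ) : kn3 k ≤ 2 * (nsup k : ℝ) := by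
  have h1 : ((k.1.natAbs : ℝ)) ^ 2 = (k.1 : ℝ) ^ 2 := by
    rw [Nat.cast_natAbs, Int.cast_abs, sq_abs]
  have h2 : ((k.2.1.natAbs : ℝ)) ^ 2 = (k.2.1 : ℝ) ^ 2 := by
    rw [Nat.cast_natAbs, Int.cast_abs, sq_abs]
  have h3 : ((k.2.2.natAbs : ℝ)) ^ 2 = (k.2.2 : ℝ) ^ 2 := by
    rw [Nat.cast_natAbs, Int.cast_abs, sq_abs]
  have e1 : (k.1.natAbs : ℝ) ≤ (nsup k : ℝ) := by
    exact_mod_cast Nat.cast_le.mpr (le_max_left _ _)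
  have e2 : (k.2.1.natAbs : ℝ) ≤ (nsup k : ℝ) := by
    exact_mod_cast Nat.cast_le.mpr (le_trans (le_max_left _ _) (le_max_right _ _))
  have e3 : (k.2.2.natAbs : ℝ) ≤ (nsup k : ℝ) := by
    exact_mod_cast Nat.cast_le.mpr (le_trans (le_max_right _ _) (le_max_right _ _))
  have hn0 : (0 : ℝ) ≤ (nsup k : ℝ) := Nat.cast_nonneg _
  have key : (k.1 : ℝ) ^ 2 + (k.2.1 : ℝ) ^ 2 + (k.2.2 : ℝ) ^ 2 ≤ (2 * (nsup k : ℝ)) ^ 2 := by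
    nlinarith [h1, h2, h3, e1, e2, e3, (Nat.cast_nonneg k.1.natAbs : (0:ℝ) ≤ _),
      (Nat.cast_nonneg k.2.1.natAbs : (0:ℝ) ≤ _), (Nat.cast_nonneg k.2.2.natAbs : (0:ℝ) ≤ _)]
  calc kn3 k ≤ Real.sqrt ((2 * (nsup k : ℝ)) ^ 2) := Real.sqrt_le_sqrt key
    _ = 2 * (nsup k : ℝ) := Real.sqrt_sq (by positivity)

lemma kn3_zero : kn3 0 = 0 := by simp [kn3]

section TermBounds

variable {β : ℝ} {k : ℤ × ℤ × ℤ}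

lemma setup (hk : k ≠ 0) :
    (1 : ℝ) ≤ (nsup k : ℝ) ∧ 2 * π * (nsup k : ℝ) ≤ 2 * π * kn3 k ∧
      0 < 2 * π * (nsup k : ℝ) := by
  have h1 : (1 : ℝ) ≤ (nsup k : ℝ) := by exact_mod_cast nsup_pos hk
  have h2 : 2 * π * (nsup k : ℝ) ≤ 2 * π * kn3 k :=
    mul_le_mul_of_nonneg_left (nsup_le_kn3 k) (by positivity)
  exact ⟨h1, h2, by positivity⟩

lemma bound_A (hβ : 0 < β) (hk : k ≠ 0) :
    ((1 + β * (2 * π * kn3 k) ^ 4)⁻¹) ^ 2 * ((2 * π * kn3 k)⁻¹) ^ 2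
      ≤ ((2 * π * (nsup k : ℝ)) ^ 2)⁻¹ := by
  obtain ⟨h1, h2, h3⟩ := setup hk
  set x := 2 * π * kn3 k with hx
  have hx0 : 0 < x := lt_of_lt_of_le h3 h2
  have ht : 0 ≤ β * x ^ 4 := by positivity
  rw [inv_pow, inv_pow, ← mul_inv]
  apply inv_anti₀ (pow_pos h3 2)
  nlinarith [pow_le_pow_left₀ h3.le h2 2, sq_nonneg x, mul_nonneg ht (sq_nonneg x),
    mul_nonneg (mul_nonneg ht ht) (sq_nonneg x)]

lemma bound_B (hβ : 0 < β) (hk : k ≠ 0) :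
    ((1 + β * (2 * π * kn3 k) ^ 4)⁻¹) ^ 2 * ((2 * π * kn3 k)⁻¹) ^ 2
      ≤ (β ^ 2 * (2 * π * (nsup k : ℝ)) ^ 10)⁻¹ := by
  obtain ⟨h1, h2, h3⟩ := setup hk
  set x := 2 * π * kn3 k with hx
  have hx0 : 0 < x := lt_of_lt_of_le h3 h2
  have ht : 0 ≤ β * x ^ 4 := by positivity
  rw [inv_pow, inv_pow, ← mul_inv]
  apply inv_anti₀ (mul_pos (pow_pos hβ 2) (pow_pos h3 10))
  have h10 : (2 * π * (nsup k : ℝ)) ^ 10 ≤ x ^ 10 := pow_le_pow_left₀ h3.le h2 10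
  have hts : (β * x ^ 4) ^ 2 ≤ (1 + β * x ^ 4) ^ 2 :=
    pow_le_pow_left₀ ht (by linarith) 2
  nlinarith [mul_le_mul_of_nonneg_right hts (sq_nonneg x),
    mul_le_mul_of_nonneg_left h10 (sq_nonneg β)]

lemma bound_C (hβ : 0 < β) :
    β * (2 * π * kn3 k) ^ 4 * ((1 + β * (2 * π * kn3 k) ^ 4)⁻¹) ^ 2
      ≤ β * (4 * π * (nsup k : ℝ)) ^ 4 := by
  have hk0 : 0 ≤ kn3 k := Real.sqrt_nonneg _
  have hx0 : (0 : ℝ) ≤ 2 * π * kn3 k := by positivity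
  set x := 2 * π * kn3 k with hx
  have hxle : x ≤ 4 * π * (nsup k : ℝ) := by
    have := kn3_le_two_nsup k
    have hπ : (0 : ℝ) ≤ 2 * π := by positivity
    calc x = 2 * π * kn3 k := hx
      _ ≤ 2 * π * (2 * (nsup k : ℝ)) := mul_le_mul_of_nonneg_left this hπ
      _ = 4 * π * (nsup k : ℝ) := by ring
  have ht : 0 ≤ β * x ^ 4 := by positivity
  have hinv : ((1 + β * x ^ 4) ^ 2)⁻¹ ≤ 1 := by
    rw [← inv_one]
    apply inv_anti₀ one_pos
    nlinarith
  calc β * x ^ 4 * ((1 + β * x ^ 4)⁻¹) ^ 2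
      = β * x ^ 4 * ((1 + β * x ^ 4) ^ 2)⁻¹ := by rw [inv_pow]
    _ ≤ β * x ^ 4 * 1 := mul_le_mul_of_nonneg_left hinv (by positivity)
    _ = β * x ^ 4 := mul_one _
    _ ≤ β * (4 * π * (nsup k : ℝ)) ^ 4 :=
        mul_le_mul_of_nonneg_left (pow_le_pow_left₀ hx0 hxle 4) hβ.le

lemma bound_D (hβ : 0 < β) (hk : k ≠ 0) :
    β * (2 * π * kn3 k) ^ 4 * ((1 + β * (2 * π * kn3 k) ^ 4)⁻¹) ^ 2
      ≤ (β * (2 * π * (nsup k : ℝ)) ^ 4)⁻¹ := by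
  obtain ⟨h1, h2, h3⟩ := setup hk
  set x := 2 * π * kn3 k with hx
  have hx0 : 0 < x := lt_of_lt_of_le h3 h2
  have ht : 0 ≤ β * x ^ 4 := by positivity
  rw [inv_pow, ← div_eq_mul_inv, inv_eq_one_div,
    div_le_div_iff₀ (by positivity) (mul_pos hβ (pow_pos h3 4))]
  have h4 : (2 * π * (nsup k : ℝ)) ^ 4 ≤ x ^ 4 := pow_le_pow_left₀ h3.le h2 4
  have hts : (β * x ^ 4) ^ 2 ≤ (1 + β * x ^ 4) ^ 2 :=
    pow_le_pow_left₀ ht (by linarith) 2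
  nlinarith [mul_le_mul_of_nonneg_left h4 (mul_nonneg (mul_nonneg hβ.le hβ.le) (pow_nonneg hx0.le 4))]

end TermBounds

lemma sqrt_step {β : ℝ} (hβ : 0 < β) {S c e : ℝ} (hc : 0 ≤ c)
    (hS : S ≤ c ^ 2 * β ^ (2 * e)) : Real.sqrt S ≤ c * β ^ e := by
  have h2 : (β ^ e) ^ (2 : ℕ) = β ^ (2 * e) := by
    rw [← Real.rpow_natCast (β ^ e) 2, ← Real.rpow_mul hβ.le]
    congr 1
    push_cast
    ring
  have h1 : c ^ 2 * β ^ (2 * e) = (c * β ^ e) ^ 2 := by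
    rw [mul_pow, h2]
  calc Real.sqrt S ≤ Real.sqrt ((c * β ^ e) ^ 2) := Real.sqrt_le_sqrt (h1 ▸ hS)
    _ = c * β ^ e := Real.sqrt_sq (by positivity)

end Stmt18

open Stmt18

set_option maxHeartbeats 4000000

/-- 3D kernel bounds:
`(Σ_{k≠0} (1+β(2π|k|)⁴)⁻² (2π|k|)⁻²)^{1/2} ≲ β^{-1/8}` and
`(Σ_k β(2π|k|)⁴ (1+β(2π|k|)⁴)⁻²)^{1/2} ≲ β^{-3/8}`. -/
theorem stmt18 :
    ∃ C₁ C₂ : ℝ, 0 < C₁ ∧ 0 < C₂ ∧ ∀ β : ℝ, 0 < β →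
      Real.sqrt (∑' k : ℤ × ℤ × ℤ,
          if k ≠ 0 then
            ((1 + β * (2 * π * kn3 k) ^ 4)⁻¹) ^ 2 * ((2 * π * kn3 k)⁻¹) ^ 2
          else 0) ≤ C₁ * β ^ (-(1 : ℝ) / 8) ∧
      Real.sqrt (∑' k : ℤ × ℤ × ℤ,
          β * (2 * π * kn3 k) ^ 4 * ((1 + β * (2 * π * kn3 k) ^ 4)⁻¹) ^ 2) ≤
        C₂ * β ^ (-(3 : ℝ) / 8) := by
  refine ⟨2, 15000, by norm_num, by norm_num, fun β hβ => ⟨?_, ?_⟩⟩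
  · -- first bound
    apply sqrt_step hβ (by norm_num : (0:ℝ) ≤ 2)
    rw [show (2:ℝ) * (-(1:ℝ) / 8) = -(1:ℝ)/4 by norm_num]
    rcases lt_or_ge β 1 with h1 | h1
    · -- small β
      set r := β ^ (-(1:ℝ)/4) with hrdef
      have hr0 : 0 < r := Real.rpow_pos_of_pos hβ _
      have hr1 : 1 ≤ r :=
        Real.one_le_rpow_of_pos_of_le_one_of_nonpos hβ h1.le (by norm_num)
      have hr4 : r ^ 4 = β⁻¹ := by
        rw [hrdef, ← Real.rpow_natCast (β ^ (-(1:ℝ)/4)) 4, ← Real.rpow_mul hβ.le]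
        norm_num [Real.rpow_neg_one]
      have hβr : β = (r ^ 4)⁻¹ := by rw [hr4, inv_inv]
      set N := ⌈r⌉₊ with hNdef
      have hN1 : 1 ≤ N := Nat.one_le_ceil_iff.mpr hr0
      have hNr : r ≤ (N:ℝ) := Nat.le_ceil r
      have hN2r : (N:ℝ) ≤ 2 * r := by
        have := Nat.ceil_lt_add_one hr0.le
        linarith
      have hNpos : (0:ℝ) < (N:ℝ) := lt_of_lt_of_le hr0 hNr
      have hNinv : ((N:ℝ))⁻¹ ≤ r⁻¹ := inv_anti₀ hr0 hNr
      refine le_trans (engine _ (fun m => if m = 0 then 0 else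
          min (((2*π*(m:ℝ))^2)⁻¹) ((β^2*(2*π*(m:ℝ))^10)⁻¹)) N 1 (r^2)
        (fun k => by split_ifs <;> positivity)
        (fun k => ?_) (by simp) hN1 zero_le_one (by positivity)
        (fun m hm1 hm2 => ?_) (fun m hm => ?_)) ?_
      · by_cases hk : k = 0
        · subst hk
          rw [if_neg (by simp), nsup_zero]
          simp
        · rw [if_pos hk, if_neg (by have := nsup_pos hk; omega)]
          exact le_min (bound_A hβ hk) (bound_B hβ hk)
      · -- bulk
        have hm1R : (1:ℝ) ≤ (m:ℝ) := by exact_mod_cast hm1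
        have hp : (0:ℝ) < 2*π*(m:ℝ) := by nlinarith [Real.pi_gt_three]
        rw [if_neg (by omega)]
        refine le_trans (mul_le_mul_of_nonneg_left (min_le_left _ _) (by positivity)) ?_
        rw [← div_eq_mul_inv, div_le_one (pow_pos hp 2)]
        have hπ2 : (9:ℝ) < π^2 := by nlinarith [Real.pi_gt_three]
        nlinarith [hπ2, sq_nonneg (m:ℝ), mul_le_mul_of_nonneg_right hπ2.le (sq_nonneg (m:ℝ))]
      · -- tail
        have hm1 : 1 ≤ m := le_trans hN1 hm.le
        have hm1R : (1:ℝ) ≤ (m:ℝ) := by exact_mod_cast hm1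
        have hm0 : (0:ℝ) < (m:ℝ) := by linarith
        have hrm : r ≤ (m:ℝ) := le_trans hNr (by exact_mod_cast Nat.cast_le.mpr hm.le)
        have hp : (0:ℝ) < 2*π*(m:ℝ) := by nlinarith [Real.pi_gt_three]
        rw [if_neg (by omega)]
        refine le_trans (mul_le_mul_of_nonneg_left (min_le_right _ _) (by positivity)) ?_
        rw [← div_eq_mul_inv, ← div_eq_mul_inv,
          div_le_div_iff₀ (mul_pos (pow_pos hβ 2) (pow_pos hp 10)) (pow_pos hm0 2)]
        rw [hβr]
        have hid : r^2 * (((r^4)⁻¹)^2 * (2*π*(m:ℝ))^10) = (2*π*(m:ℝ))^10 / r^6 := by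
          field_simp
        rw [hid, le_div_iff₀ (pow_pos hr0 6)]
        have h6 : r^6 ≤ (m:ℝ)^6 := pow_le_pow_left₀ hr0.le hrm 6
        have hp10 : (6:ℝ)^10 ≤ (2*π)^10 :=
          pow_le_pow_left₀ (by norm_num) (by nlinarith [Real.pi_gt_three]) 10
        nlinarith [mul_le_mul_of_nonneg_left h6
            (by positivity : (0:ℝ) ≤ 26*(m:ℝ)^2*(m:ℝ)^2),
          mul_le_mul_of_nonneg_right hp10 (by positivity : (0:ℝ) ≤ (m:ℝ)^10),
          pow_nonneg hm0.le 10]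
      · -- final arithmetic
        have hstep : r^2 * ((N:ℝ))⁻¹ ≤ r := by
          calc r^2 * ((N:ℝ))⁻¹ ≤ r^2 * r⁻¹ :=
                mul_le_mul_of_nonneg_left hNinv (by positivity)
            _ = r := by field_simp [hr0.ne']
        have : (2:ℝ)^2 * β ^ (-(1:ℝ)/4) = 4 * r := by rw [← hrdef]; norm_num
        rw [this]
        have h1N : (1:ℝ) * (N:ℝ) ≤ 2 * r := by linarith
        linarith
    · -- large β
      have hb2 : (β^2)⁻¹ = β ^ (-2:ℝ) := by
        rw [← Real.rpow_natCast β 2, ← Real.rpow_neg hβ.le]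
        norm_num
      refine le_trans (engine _ (fun m => if m = 0 then 0 else
          (β^2*(2*π*(m:ℝ))^10)⁻¹) 1 ((β^2)⁻¹) ((β^2)⁻¹)
        (fun k => by split_ifs <;> positivity)
        (fun k => ?_) (by simp) le_rfl (by positivity) (by positivity)
        (fun m hm1 hm2 => ?_) (fun m hm => ?_)) ?_
      · by_cases hk : k = 0
        · subst hk
          rw [if_neg (by simp), nsup_zero]
          simp
        · rw [if_pos hk, if_neg (by have := nsup_pos hk; omega)]
          exact bound_B hβ hk
      · -- bulk
        have hm1R : (1:ℝ) ≤ (m:ℝ) := by exact_mod_cast hm1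
        have hp : (0:ℝ) < 2*π*(m:ℝ) := by nlinarith [Real.pi_gt_three]
        rw [if_neg (by omega)]
        rw [← div_eq_mul_inv, inv_eq_one_div,
          div_le_div_iff₀ (mul_pos (pow_pos hβ 2) (pow_pos hp 10)) (pow_pos hβ 2)]
        have hmm : (m:ℝ)^2 ≤ (m:ℝ)^10 := pow_le_pow_right₀ hm1R (by norm_num)
        have hp10 : (6:ℝ)^10 ≤ (2*π)^10 :=
          pow_le_pow_left₀ (by norm_num) (by nlinarith [Real.pi_gt_three]) 10
        nlinarith [mul_le_mul_of_nonneg_left hmm (by positivity : (0:ℝ) ≤ 26*β^2),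
          mul_le_mul_of_nonneg_right hp10
            (mul_nonneg (sq_nonneg β) (pow_nonneg (by linarith : (0:ℝ) ≤ (m:ℝ)) 10)),
          mul_nonneg (sq_nonneg β) (pow_nonneg (by linarith : (0:ℝ) ≤ (m:ℝ)) 10)]
      · -- tail
        have hm1 : 1 ≤ m := le_trans le_rfl hm.le
        have hm1R : (1:ℝ) ≤ (m:ℝ) := by exact_mod_cast hm1
        have hm0 : (0:ℝ) < (m:ℝ) := by linarith
        have hp : (0:ℝ) < 2*π*(m:ℝ) := by nlinarith [Real.pi_gt_three]
        rw [if_neg (by omega), ← mul_inv, ← div_eq_mul_inv, inv_eq_one_div,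
          div_le_div_iff₀ (mul_pos (pow_pos hβ 2) (pow_pos hp 10))
            (mul_pos (pow_pos hβ 2) (pow_pos hm0 2))]
        have hmm : (m:ℝ)^4 ≤ (m:ℝ)^10 := pow_le_pow_right₀ hm1R (by norm_num)
        have hp10 : (6:ℝ)^10 ≤ (2*π)^10 :=
          pow_le_pow_left₀ (by norm_num) (by nlinarith [Real.pi_gt_three]) 10
        nlinarith [mul_le_mul_of_nonneg_left hmm (by positivity : (0:ℝ) ≤ 26*β^2),
          mul_le_mul_of_nonneg_right hp10
            (mul_nonneg (sq_nonneg β) (pow_nonneg (by linarith : (0:ℝ) ≤ (m:ℝ)) 10)),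
          mul_nonneg (sq_nonneg β) (pow_nonneg (by linarith : (0:ℝ) ≤ (m:ℝ)) 10)]
      · -- final arithmetic
        have hexp : β ^ (-2:ℝ) ≤ β ^ (-(1:ℝ)/4) :=
          Real.rpow_le_rpow_of_exponent_le h1 (by norm_num)
        have hpos : (0:ℝ) < β ^ (-(1:ℝ)/4) := Real.rpow_pos_of_pos hβ _
        push_cast
        rw [hb2]
        nlinarith [hexp, hpos]
  · -- second bound
    apply sqrt_step hβ (by norm_num : (0:ℝ) ≤ 15000)
    rw [show (2:ℝ) * (-(3:ℝ) / 8) = -(3:ℝ)/4 by norm_num]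
    rcases lt_or_ge β 1 with h1 | h1
    · -- small β
      set r := β ^ (-(1:ℝ)/4) with hrdef
      have hr0 : 0 < r := Real.rpow_pos_of_pos hβ _
      have hr1 : 1 ≤ r :=
        Real.one_le_rpow_of_pos_of_le_one_of_nonpos hβ h1.le (by norm_num)
      have hr4 : r ^ 4 = β⁻¹ := by
        rw [hrdef, ← Real.rpow_natCast (β ^ (-(1:ℝ)/4)) 4, ← Real.rpow_mul hβ.le]
        norm_num [Real.rpow_neg_one]
      have hβr : β = (r ^ 4)⁻¹ := by rw [hr4, inv_inv]
      have hr4β : r^4 * β = 1 := by rw [hr4, inv_mul_cancel₀ hβ.ne']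
      have hr3 : r^3 = β ^ (-(3:ℝ)/4) := by
        rw [hrdef, ← Real.rpow_natCast (β ^ (-(1:ℝ)/4)) 3, ← Real.rpow_mul hβ.le]
        norm_num
      set N := ⌈r⌉₊ with hNdef
      have hN1 : 1 ≤ N := Nat.one_le_ceil_iff.mpr hr0
      have hNr : r ≤ (N:ℝ) := Nat.le_ceil r
      have hN2r : (N:ℝ) ≤ 2 * r := by
        have := Nat.ceil_lt_add_one hr0.le
        linarith
      have hNpos : (0:ℝ) < (N:ℝ) := lt_of_lt_of_le hr0 hNr
      have hNinv : ((N:ℝ))⁻¹ ≤ r⁻¹ := inv_anti₀ hr0 hNr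
      refine le_trans (engine _ (fun m => if m = 0 then 0 else
          min (β*(4*π*(m:ℝ))^4) ((β*(2*π*(m:ℝ))^4)⁻¹)) N
          (26*(4*π)^4*β*((N:ℝ))^6) (r^4)
        (fun k => mul_nonneg (mul_nonneg hβ.le (by positivity)) (sq_nonneg _))
        (fun k => ?_) (by simp) hN1
        (mul_nonneg (mul_nonneg (mul_nonneg (by norm_num) (by positivity)) hβ.le)
          (by positivity))
        (by positivity)
        (fun m hm1 hm2 => ?_) (fun m hm => ?_)) ?_
      · by_cases hk : k = 0
        · subst hk
          rw [nsup_zero]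
          simp [kn3_zero]
        · rw [if_neg (by have := nsup_pos hk; omega)]
          exact le_min (bound_C hβ) (bound_D hβ hk)
      · -- bulk
        have hm1R : (1:ℝ) ≤ (m:ℝ) := by exact_mod_cast hm1
        have hmN : (m:ℝ) ≤ (N:ℝ) := by exact_mod_cast hm2
        rw [if_neg (by omega)]
        refine le_trans (mul_le_mul_of_nonneg_left (min_le_left _ _) (by positivity)) ?_
        have h6 : (m:ℝ)^6 ≤ (N:ℝ)^6 := pow_le_pow_left₀ (by linarith) hmN 6
        nlinarith [mul_le_mul_of_nonneg_left h6
          (mul_nonneg (by positivity : (0:ℝ) ≤ 26*(4*π)^4) hβ.le)]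
      · -- tail
        have hm1 : 1 ≤ m := le_trans hN1 hm.le
        have hm1R : (1:ℝ) ≤ (m:ℝ) := by exact_mod_cast hm1
        have hm0 : (0:ℝ) < (m:ℝ) := by linarith
        have hp : (0:ℝ) < 2*π*(m:ℝ) := by nlinarith [Real.pi_gt_three]
        rw [if_neg (by omega)]
        refine le_trans (mul_le_mul_of_nonneg_left (min_le_right _ _) (by positivity)) ?_
        rw [← div_eq_mul_inv, ← div_eq_mul_inv,
          div_le_div_iff₀ (mul_pos hβ (pow_pos hp 4)) (pow_pos hm0 2)]
        have key : r^4*(β*(2*π*(m:ℝ))^4) = (2*π*(m:ℝ))^4 := by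
          rw [show r^4*(β*(2*π*(m:ℝ))^4) = (r^4*β)*(2*π*(m:ℝ))^4 from by ring, hr4β,
            one_mul]
        rw [key]
        have hπ2 : (9:ℝ) < π^2 := by nlinarith [Real.pi_gt_three]
        have hπ4 : (81:ℝ) < π^4 := by nlinarith [hπ2]
        nlinarith [mul_le_mul_of_nonneg_right hπ4.le
          (pow_nonneg (by linarith : (0:ℝ) ≤ (m:ℝ)) 4), sq_nonneg ((m:ℝ)^2)]
      · -- final arithmetic
        rw [← hr3]
        have hN7 : (N:ℝ)^7 ≤ 128*r^7 := by
          calc (N:ℝ)^7 ≤ (2*r)^7 := pow_le_pow_left₀ (by positivity) hN2r 7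
            _ = 128*r^7 := by ring
        have hβr7 : β * r^7 = r^3 := by
          rw [hβr]
          field_simp
        have hD : r^4*((N:ℝ))⁻¹ ≤ r^3 := by
          calc r^4*((N:ℝ))⁻¹ ≤ r^4*r⁻¹ :=
              mul_le_mul_of_nonneg_left hNinv (by positivity)
            _ = r^3 := by field_simp [hr0.ne']
        have hπ444 : (4*π)^4 ≤ 28561 := by
          have hq : π^2 ≤ 9.9225 := by nlinarith [Real.pi_lt_d2, Real.pi_pos]
          have hq4 : π^4 ≤ 98.46 := by nlinarith [hq, sq_nonneg π, sq_nonneg (π^2), Real.pi_pos]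
          nlinarith [hq4]
        have hBC : β*((N:ℝ))^7 ≤ 128*r^3 := by
          calc β*((N:ℝ))^7 ≤ β*(128*r^7) :=
              mul_le_mul_of_nonneg_left hN7 hβ.le
            _ = 128*(β*r^7) := by ring
            _ = 128*r^3 := by rw [hβr7]
        have hr3nn : (0:ℝ) ≤ r^3 := by positivity
        nlinarith [mul_le_mul_of_nonneg_left hBC (by positivity : (0:ℝ) ≤ 26*(4*π)^4),
          mul_le_mul_of_nonneg_right hπ444 (by positivity : (0:ℝ) ≤ 26*128*r^3), hD]
    · -- large β
      have hb1 : β⁻¹ = β ^ (-1:ℝ) := (Real.rpow_neg_one β).symm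
      refine le_trans (engine _ (fun m => if m = 0 then 0 else
          (β*(2*π*(m:ℝ))^4)⁻¹) 1 (β⁻¹) (β⁻¹)
        (fun k => mul_nonneg (mul_nonneg hβ.le (by positivity)) (sq_nonneg _))
        (fun k => ?_) (by simp) le_rfl (by positivity) (by positivity)
        (fun m hm1 hm2 => ?_) (fun m hm => ?_)) ?_
      · by_cases hk : k = 0
        · subst hk
          rw [nsup_zero]
          simp [kn3_zero]
        · rw [if_neg (by have := nsup_pos hk; omega)]
          exact bound_D hβ hk
      · -- bulk
        have hm1R : (1:ℝ) ≤ (m:ℝ) := by exact_mod_cast hm1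
        have hm0 : (0:ℝ) < (m:ℝ) := by linarith
        have hp : (0:ℝ) < 2*π*(m:ℝ) := by nlinarith [Real.pi_gt_three]
        rw [if_neg (by omega), ← div_eq_mul_inv, inv_eq_one_div,
          div_le_div_iff₀ (mul_pos hβ (pow_pos hp 4)) hβ]
        have hmm : (m:ℝ)^2 ≤ (m:ℝ)^4 := pow_le_pow_right₀ hm1R (by norm_num)
        have hπ2 : (9:ℝ) < π^2 := by nlinarith [Real.pi_gt_three]
        have hπ4 : (81:ℝ) < π^4 := by nlinarith [hπ2]
        nlinarith [mul_le_mul_of_nonneg_left hmm (by positivity : (0:ℝ) ≤ 26*β),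
          mul_le_mul_of_nonneg_right hπ4.le
            (mul_nonneg hβ.le (pow_nonneg hm0.le 4))]
      · -- tail
        have hm1 : 1 ≤ m := le_trans le_rfl hm.le
        have hm1R : (1:ℝ) ≤ (m:ℝ) := by exact_mod_cast hm1
        have hm0 : (0:ℝ) < (m:ℝ) := by linarith
        have hp : (0:ℝ) < 2*π*(m:ℝ) := by nlinarith [Real.pi_gt_three]
        rw [if_neg (by omega), ← mul_inv, ← div_eq_mul_inv, inv_eq_one_div,
          div_le_div_iff₀ (mul_pos hβ (pow_pos hp 4)) (mul_pos hβ (pow_pos hm0 2))]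
        have hmm : (m:ℝ)^4 ≤ (m:ℝ)^4 := le_rfl
        have hπ2 : (9:ℝ) < π^2 := by nlinarith [Real.pi_gt_three]
        have hπ4 : (81:ℝ) < π^4 := by nlinarith [hπ2]
        nlinarith [mul_le_mul_of_nonneg_right hπ4.le
            (mul_nonneg hβ.le (pow_nonneg hm0.le 4))]
      · -- final arithmetic
        have hexp : β ^ (-1:ℝ) ≤ β ^ (-(3:ℝ)/4) :=
          Real.rpow_le_rpow_of_exponent_le h1 (by norm_num)
        have hpos : (0:ℝ) < β ^ (-(3:ℝ)/4) := Real.rpow_pos_of_pos hβ _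
        push_cast
        rw [hb1]
        nlinarith [hexp, hpos]
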